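/- arXiv:2401.03029 — 9 statements merged into one kernel-verified Lean document; each statement's English description precedes it below -/
import Mathlib

section
/- Let U ⊆ ℝ² be open and let p₁,p₂,q₁,q₂,k₁,k₂,K : U → ℝ be smooth functions satisfying Cartan's structure equations: ∂ₓp₂ - ∂ᵧp₁ = -(k₁q₂ - k₂q₁), ∂ₓq₂ - ∂ᵧq₁ = k₁p₂ - k₂p₁, and ∂ₓk₂ - ∂ᵧk₁ = K·(p₁q₂ - p₂q₁), and suppose the coframe condition p₁q₂ - p₂q₁ ≠ 0 holds everywhere on U. Define the 2×2-matrix-valued functions A₁ = ½·[[q₁, p₁-k₁],[p₁+k₁, -q₁]] and A₂ = ½·[[q₂, p₂-k₂],[p₂+k₂, -q₂]]. Then (A₁,A₂) satisfies the zero-curvature equation on U if and only if K(x,y) = -1 for all (x,y) ∈ U. -/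
open Matrix

/-- Partial derivative in the `x`-direction of a function on `ℝ²`. -/
noncomputable def pdx (f : ℝ × ℝ → ℝ) (z : ℝ × ℝ) : ℝ := fderiv ℝ f z (1, 0)

/-- Partial derivative in the `y`-direction of a function on `ℝ²`. -/
noncomputable def pdy (f : ℝ × ℝ → ℝ) (z : ℝ × ℝ) : ℝ := fderiv ℝ f z (0, 1)

/-- Entrywise partial derivative in the `x`-direction of a matrix-valued function on `ℝ²`. -/
noncomputable def pdxM (A : ℝ × ℝ → Matrix (Fin 2) (Fin 2) ℝ) (z : ℝ × ℝ) :
    Matrix (Fin 2) (Fin 2) ℝ := Matrix.of fun i j => pdx (fun w => A w i j) z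

/-- Entrywise partial derivative in the `y`-direction of a matrix-valued function on `ℝ²`. -/
noncomputable def pdyM (A : ℝ × ℝ → Matrix (Fin 2) (Fin 2) ℝ) (z : ℝ × ℝ) :
    Matrix (Fin 2) (Fin 2) ℝ := Matrix.of fun i j => pdy (fun w => A w i j) z

/-- The zero-curvature (flatness) equation for the connection 1-form `A = A₁ dx + A₂ dy`,
required to hold at every point of `U`. -/
noncomputable def ZeroCurvatureOn (A₁ A₂ : ℝ × ℝ → Matrix (Fin 2) (Fin 2) ℝ)
    (U : Set (ℝ × ℝ)) : Prop :=
  ∀ z ∈ U, pdxM A₂ z - pdyM A₁ z + A₁ z * A₂ z - A₂ z * A₁ z = 0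

lemma pdx_comb (c d : ℝ) (f g : ℝ × ℝ → ℝ) (z : ℝ × ℝ)
    (hf : DifferentiableAt ℝ f z) (hg : DifferentiableAt ℝ g z) :
    pdx (fun w => c * f w + d * g w) z = c * pdx f z + d * pdx g z := by
  unfold pdx
  rw [fderiv_fun_add (hf.const_mul c) (hg.const_mul d), fderiv_const_mul hf, fderiv_const_mul hg]
  simp

lemma pdy_comb (c d : ℝ) (f g : ℝ × ℝ → ℝ) (z : ℝ × ℝ)
    (hf : DifferentiableAt ℝ f z) (hg : DifferentiableAt ℝ g z) :
    pdy (fun w => c * f w + d * g w) z = c * pdy f z + d * pdy g z := by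
  unfold pdy
  rw [fderiv_fun_add (hf.const_mul c) (hg.const_mul d), fderiv_const_mul hf, fderiv_const_mul hg]
  simp

lemma pdxM_mat (p q k : ℝ × ℝ → ℝ) (z : ℝ × ℝ)
    (hp : DifferentiableAt ℝ p z) (hq : DifferentiableAt ℝ q z)
    (hk : DifferentiableAt ℝ k z) :
    pdxM (fun w => (1/2 : ℝ) • !![q w, p w - k w; p w + k w, -q w]) z
      = (1/2 : ℝ) • !![pdx q z, pdx p z - pdx k z; pdx p z + pdx k z, -pdx q z] := by
  ext i j
  fin_cases i <;> fin_cases j <;>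
    simp only [pdxM, Matrix.of_apply, Matrix.smul_apply, smul_eq_mul,
      Matrix.cons_val', Matrix.cons_val_zero, Matrix.cons_val_one, Matrix.head_cons,
      Matrix.head_fin_const, Matrix.empty_val', Matrix.cons_val_fin_one, Fin.isValue, Fin.zero_eta, Fin.mk_one]
  · rw [show (fun w => (1/2 : ℝ) * q w) = (fun w => (1/2 : ℝ) * q w + 0 * q w) from
      funext fun w => by ring, pdx_comb _ _ _ _ _ hq hq]; ring
  · rw [show (fun w => (1/2 : ℝ) * (p w - k w)) =
      (fun w => (1/2 : ℝ) * p w + (-(1/2) : ℝ) * k w) from funext fun w => by ring,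
      pdx_comb _ _ _ _ _ hp hk]; ring
  · rw [show (fun w => (1/2 : ℝ) * (p w + k w)) =
      (fun w => (1/2 : ℝ) * p w + ((1/2) : ℝ) * k w) from funext fun w => by ring,
      pdx_comb _ _ _ _ _ hp hk]; ring
  · rw [show (fun w => (1/2 : ℝ) * -q w) = (fun w => (-(1/2) : ℝ) * q w + 0 * q w) from
      funext fun w => by ring, pdx_comb _ _ _ _ _ hq hq]; ring

lemma pdyM_mat (p q k : ℝ × ℝ → ℝ) (z : ℝ × ℝ)
    (hp : DifferentiableAt ℝ p z) (hq : DifferentiableAt ℝ q z)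
    (hk : DifferentiableAt ℝ k z) :
    pdyM (fun w => (1/2 : ℝ) • !![q w, p w - k w; p w + k w, -q w]) z
      = (1/2 : ℝ) • !![pdy q z, pdy p z - pdy k z; pdy p z + pdy k z, -pdy q z] := by
  ext i j
  fin_cases i <;> fin_cases j <;>
    simp only [pdyM, Matrix.of_apply, Matrix.smul_apply, smul_eq_mul,
      Matrix.cons_val', Matrix.cons_val_zero, Matrix.cons_val_one, Matrix.head_cons,
      Matrix.head_fin_const, Matrix.empty_val', Matrix.cons_val_fin_one, Fin.isValue, Fin.zero_eta, Fin.mk_one]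
  · rw [show (fun w => (1/2 : ℝ) * q w) = (fun w => (1/2 : ℝ) * q w + 0 * q w) from
      funext fun w => by ring, pdy_comb _ _ _ _ _ hq hq]; ring
  · rw [show (fun w => (1/2 : ℝ) * (p w - k w)) =
      (fun w => (1/2 : ℝ) * p w + (-(1/2) : ℝ) * k w) from funext fun w => by ring,
      pdy_comb _ _ _ _ _ hp hk]; ring
  · rw [show (fun w => (1/2 : ℝ) * (p w + k w)) =
      (fun w => (1/2 : ℝ) * p w + ((1/2) : ℝ) * k w) from funext fun w => by ring,
      pdy_comb _ _ _ _ _ hp hk]; ring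
  · rw [show (fun w => (1/2 : ℝ) * -q w) = (fun w => (-(1/2) : ℝ) * q w + 0 * q w) from
      funext fun w => by ring, pdy_comb _ _ _ _ _ hq hq]; ring

/-- A hyperbolic 0-metric corresponds to a flat `sl(2,ℝ)`-connection: the connection 1-form
built from an orthonormal coframe `α₁ = p₁dx + p₂dy, α₂ = q₁dx + q₂dy` and its spin connection
`κ = k₁dx + k₂dy` satisfying Cartan's structure equations is flat on `U` iff the Gauss
curvature `K` equals `-1` on `U`. -/
theorem zero_curvature_iff_gauss_curvature_neg_one
    (U : Set (ℝ × ℝ)) (hU : IsOpen U)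
    (p₁ p₂ q₁ q₂ k₁ k₂ K : ℝ × ℝ → ℝ)
    (hp₁ : ContDiffOn ℝ (⊤ : ℕ∞) p₁ U) (hp₂ : ContDiffOn ℝ (⊤ : ℕ∞) p₂ U)
    (hq₁ : ContDiffOn ℝ (⊤ : ℕ∞) q₁ U) (hq₂ : ContDiffOn ℝ (⊤ : ℕ∞) q₂ U)
    (hk₁ : ContDiffOn ℝ (⊤ : ℕ∞) k₁ U) (hk₂ : ContDiffOn ℝ (⊤ : ℕ∞) k₂ U)
    (hK : ContDiffOn ℝ (⊤ : ℕ∞) K U)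
    (hstruct₁ : ∀ z ∈ U, pdx p₂ z - pdy p₁ z = -(k₁ z * q₂ z - k₂ z * q₁ z))
    (hstruct₂ : ∀ z ∈ U, pdx q₂ z - pdy q₁ z = k₁ z * p₂ z - k₂ z * p₁ z)
    (hstruct₃ : ∀ z ∈ U, pdx k₂ z - pdy k₁ z = K z * (p₁ z * q₂ z - p₂ z * q₁ z))
    (hcoframe : ∀ z ∈ U, p₁ z * q₂ z - p₂ z * q₁ z ≠ 0)
    (A₁ A₂ : ℝ × ℝ → Matrix (Fin 2) (Fin 2) ℝ)
    (hA₁ : A₁ = fun z => (1/2 : ℝ) •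
      !![q₁ z, p₁ z - k₁ z; p₁ z + k₁ z, -q₁ z])
    (hA₂ : A₂ = fun z => (1/2 : ℝ) •
      !![q₂ z, p₂ z - k₂ z; p₂ z + k₂ z, -q₂ z]) :
    ZeroCurvatureOn A₁ A₂ U ↔ ∀ z ∈ U, K z = -1 := by
  have key : ∀ z ∈ U, pdxM A₂ z - pdyM A₁ z + A₁ z * A₂ z - A₂ z * A₁ z
      = ((K z + 1) * (p₁ z * q₂ z - p₂ z * q₁ z) / 2) • !![(0:ℝ), -1; 1, 0] := by
    intro z hz
    have hmem := hU.mem_nhds hz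
    have dp₁ : DifferentiableAt ℝ p₁ z := (hp₁.contDiffAt hmem).differentiableAt (by simp)
    have dp₂ : DifferentiableAt ℝ p₂ z := (hp₂.contDiffAt hmem).differentiableAt (by simp)
    have dq₁ : DifferentiableAt ℝ q₁ z := (hq₁.contDiffAt hmem).differentiableAt (by simp)
    have dq₂ : DifferentiableAt ℝ q₂ z := (hq₂.contDiffAt hmem).differentiableAt (by simp)
    have dk₁ : DifferentiableAt ℝ k₁ z := (hk₁.contDiffAt hmem).differentiableAt (by simp)
    have dk₂ : DifferentiableAt ℝ k₂ z := (hk₂.contDiffAt hmem).differentiableAt (by simp)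
    have h1 := hstruct₁ z hz
    have h2 := hstruct₂ z hz
    have h3 := hstruct₃ z hz
    rw [hA₁, hA₂, pdxM_mat _ _ _ z dp₂ dq₂ dk₂, pdyM_mat _ _ _ z dp₁ dq₁ dk₁]
    ext i j
    fin_cases i <;> fin_cases j <;>
      simp only [Matrix.sub_apply, Matrix.add_apply, Matrix.of_apply, Matrix.smul_apply, smul_eq_mul,
        Matrix.mul_apply, Fin.sum_univ_two, Matrix.cons_val', Matrix.cons_val_zero,
        Matrix.cons_val_one, Matrix.head_cons, Matrix.head_fin_const, Matrix.empty_val',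
        Matrix.cons_val_fin_one, Fin.isValue, Fin.zero_eta, Fin.mk_one]
    · linear_combination h2 / 2
    · linear_combination h1 / 2 - h3 / 2
    · linear_combination h1 / 2 + h3 / 2
    · linear_combination -h2 / 2
  constructor
  · intro h z hz
    have h0 := h z hz
    rw [key z hz] at h0
    have h10 : ((K z + 1) * (p₁ z * q₂ z - p₂ z * q₁ z) / 2) * 1 = 0 := by
      have := congrFun (congrFun h0 1) 0
      simpa using this
    have hD := hcoframe z hz
    have hprod : (K z + 1) * (p₁ z * q₂ z - p₂ z * q₁ z) = 0 := by linarith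
    rcases mul_eq_zero.mp hprod with h | h
    · linarith
    · exact absurd h hD
  · intro h z hz
    rw [key z hz, h z hz]
    simp
end

section
/- Let T : ℝ → ℝ be a smooth function. On the open set {(x,y) ∈ ℝ² : y ≠ 0}, define the 2×2-matrix-valued functions A₁(x,y) = [[0, 1/y],[-T(x)·y, 0]] and A₂(x,y) = [[1/(2y), 0],[0, -1/(2y)]]. Then (A₁,A₂) satisfies the zero-curvature equation: ∂ₓA₂ - ∂ᵧA₁ + A₁A₂ - A₂A₁ = 0. -/
open Matrix

section aux

lemma hasFDerivAt_inv2' {z : ℝ × ℝ} (hz : z.2 ≠ 0) :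
    HasFDerivAt (fun w : ℝ × ℝ => 1 / (2 * w.2))
      ((-(2 / (2 * z.2) ^ 2)) • ContinuousLinearMap.snd ℝ ℝ ℝ) z := by
  have h1 : HasDerivAt (fun t : ℝ => 1 / (2 * t)) (-(2 / (2 * z.2) ^ 2)) z.2 := by
    have := (hasDerivAt_inv (by simpa using hz : (2 : ℝ) * z.2 ≠ 0)).comp z.2
      ((hasDerivAt_id z.2).const_mul 2)
    convert this using 1
    · rfl
    · rfl
    · ext t; simp [Function.comp, one_div]
    · field_simp
  exact h1.comp_hasFDerivAt z hasFDerivAt_snd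

lemma pdx_inv2 {z : ℝ × ℝ} (hz : z.2 ≠ 0) :
    pdx (fun w : ℝ × ℝ => 1 / (2 * w.2)) z = 0 := by
  unfold pdx
  rw [(hasFDerivAt_inv2' hz).fderiv]
  simp

lemma pdx_neg_inv2 {z : ℝ × ℝ} (hz : z.2 ≠ 0) :
    pdx (fun w : ℝ × ℝ => -(1 / (2 * w.2))) z = 0 := by
  unfold pdx
  rw [HasFDerivAt.fderiv (f := fun w : ℝ × ℝ => -(1 / (2 * w.2))) ((hasFDerivAt_inv2' hz).neg)]
  simp

lemma pdy_inv {z : ℝ × ℝ} (hz : z.2 ≠ 0) :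
    pdy (fun w : ℝ × ℝ => 1 / w.2) z = -(1 / z.2 ^ 2) := by
  have h1 : HasDerivAt (fun t : ℝ => 1 / t) (-(1 / z.2 ^ 2)) z.2 := by
    simpa [one_div] using (hasDerivAt_inv hz)
  have h := h1.comp_hasFDerivAt z (hasFDerivAt_snd (𝕜 := ℝ) (E := ℝ) (F := ℝ))
  have h' : HasFDerivAt (fun w : ℝ × ℝ => 1 / w.2)
      ((-(1 / z.2 ^ 2)) • ContinuousLinearMap.snd ℝ ℝ ℝ) z := h
  unfold pdy
  rw [h'.fderiv]
  simp

lemma pdy_Ty {T : ℝ → ℝ} (hT : ContDiff ℝ (⊤ : ℕ∞) T) (z : ℝ × ℝ) :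
    pdy (fun w : ℝ × ℝ => -T w.1 * w.2) z = -T z.1 := by
  have hT' : HasDerivAt T (deriv T z.1) z.1 :=
    (hT.differentiable (by simp) z.1).hasDerivAt
  have h1 : HasFDerivAt (fun w : ℝ × ℝ => T w.1)
      ((deriv T z.1) • ContinuousLinearMap.fst ℝ ℝ ℝ) z :=
    hT'.comp_hasFDerivAt z hasFDerivAt_fst
  have h2 : HasFDerivAt (fun w : ℝ × ℝ => w.2) (ContinuousLinearMap.snd ℝ ℝ ℝ) z :=
    hasFDerivAt_snd
  have h := (h1.neg.mul h2)
  unfold pdy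
  rw [HasFDerivAt.fderiv (f := fun w : ℝ × ℝ => -T w.1 * w.2) h]
  simp

lemma pdx_const (c : ℝ) (z : ℝ × ℝ) : pdx (fun _ => c) z = 0 := by
  simp [pdx]

lemma pdy_const (c : ℝ) (z : ℝ × ℝ) : pdy (fun _ => c) z = 0 := by
  simp [pdy]

end aux

/-- The connection 1-form in the Fefferman–Graham gauge,
`A₁ = [[0, 1/y],[-T(x)·y, 0]]`, `A₂ = [[1/(2y), 0],[0, -1/(2y)]]`, is flat on `{y ≠ 0}`. -/
theorem feffermanGraham_zero_curvature
    (T : ℝ → ℝ) (hT : ContDiff ℝ (⊤ : ℕ∞) T)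
    (A₁ A₂ : ℝ × ℝ → Matrix (Fin 2) (Fin 2) ℝ)
    (hA₁ : A₁ = fun z => !![0, 1 / z.2; -T z.1 * z.2, 0])
    (hA₂ : A₂ = fun z => !![1 / (2 * z.2), 0; 0, -(1 / (2 * z.2))]) :
    ∀ z : ℝ × ℝ, z.2 ≠ 0 →
      pdxM A₂ z - pdyM A₁ z + A₁ z * A₂ z - A₂ z * A₁ z = 0 := by
  intro z hz
  have hX : pdxM A₂ z = 0 := by
    subst hA₂
    ext i j
    fin_cases i <;> fin_cases j <;>
      simp only [pdxM, Matrix.of_apply, Matrix.cons_val_zero, Matrix.cons_val_one,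
        Matrix.head_cons, Matrix.head_fin_const, Matrix.cons_val', Matrix.empty_val',
        Matrix.cons_val_fin_one, Fin.isValue, Fin.zero_eta, Fin.mk_one, Matrix.zero_apply] <;>
      first
        | exact pdx_inv2 hz
        | exact pdx_neg_inv2 hz
        | exact pdx_const 0 z
  have hY : pdyM A₁ z = !![0, -(1 / z.2 ^ 2); -T z.1, 0] := by
    subst hA₁
    ext i j
    fin_cases i <;> fin_cases j <;>
      simp only [pdyM, Matrix.of_apply, Matrix.cons_val_zero, Matrix.cons_val_one,
        Matrix.head_cons, Matrix.head_fin_const, Matrix.cons_val', Matrix.empty_val',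
        Matrix.cons_val_fin_one, Fin.isValue, Fin.zero_eta, Fin.mk_one] <;>
      first
        | exact pdy_inv hz
        | exact pdy_Ty hT z
        | exact pdy_const 0 z
  rw [hX, hY, hA₁, hA₂]
  ext i j
  fin_cases i <;> fin_cases j <;>
    simp [Matrix.mul_apply, Fin.sum_univ_two] <;>
    field_simp <;> ring
end

section
/- Let U ⊆ ℝ² be open, let p₁,p₂,q₁,q₂,k₁,k₂ : U → ℝ and φ : U → ℝ be smooth. Define the rotated components p'ᵢ = cos(φ)·pᵢ + sin(φ)·qᵢ, q'ᵢ = -sin(φ)·pᵢ + cos(φ)·qᵢ, and k'ᵢ = kᵢ - ∂ᵢφ (i = 1,2, where ∂₁ = ∂ₓ, ∂₂ = ∂ᵧ). Set Aᵢ = ½·[[qᵢ, pᵢ-kᵢ],[pᵢ+kᵢ, -qᵢ]] and A'ᵢ = ½·[[q'ᵢ, p'ᵢ-k'ᵢ],[p'ᵢ+k'ᵢ, -q'ᵢ]], and let R(θ) = [[cos θ, -sin θ],[sin θ, cos θ]]. Then for i = 1,2: A'ᵢ = R(φ/2)·Aᵢ·R(φ/2)⁻¹ - ∂ᵢ(R(φ/2))·R(φ/2)⁻¹.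 -/
open Matrix

/-- The rotation matrix `R(θ)`. -/
noncomputable def R (θ : ℝ) : Matrix (Fin 2) (Fin 2) ℝ :=
  !![Real.cos θ, -Real.sin θ; Real.sin θ, Real.cos θ]

theorem hasFDerivAt_cos_half (f : ℝ × ℝ → ℝ) (z : ℝ × ℝ) (h : DifferentiableAt ℝ f z) :
    HasFDerivAt (fun w => Real.cos (f w / 2)) ((-(Real.sin (f z / 2) / 2)) • fderiv ℝ f z) z := by
  have h2 : HasFDerivAt (fun w => f w / 2) ((1/2 : ℝ) • fderiv ℝ f z) z := by
    simpa [div_eq_inv_mul, smul_eq_mul] using h.hasFDerivAt.const_mul (1/2 : ℝ)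
  have h1 := (Real.hasDerivAt_cos (f z / 2)).comp_hasFDerivAt z h2
  exact h1.congr_fderiv (by
    rw [smul_smul]; congr 1; ring)

theorem hasFDerivAt_sin_half (f : ℝ × ℝ → ℝ) (z : ℝ × ℝ) (h : DifferentiableAt ℝ f z) :
    HasFDerivAt (fun w => Real.sin (f w / 2)) ((Real.cos (f z / 2) / 2) • fderiv ℝ f z) z := by
  have h2 : HasFDerivAt (fun w => f w / 2) ((1/2 : ℝ) • fderiv ℝ f z) z := by
    simpa [div_eq_inv_mul, smul_eq_mul] using h.hasFDerivAt.const_mul (1/2 : ℝ)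
  have h1 := (Real.hasDerivAt_sin (f z / 2)).comp_hasFDerivAt z h2
  simpa [Function.comp_def, neg_smul, smul_smul, div_eq_mul_inv] using h1

theorem fderiv_cos_half (f : ℝ × ℝ → ℝ) (z v : ℝ × ℝ) (h : DifferentiableAt ℝ f z) :
    fderiv ℝ (fun w => Real.cos (f w / 2)) z v
      = -(Real.sin (f z / 2) / 2) * fderiv ℝ f z v := by
  rw [(hasFDerivAt_cos_half f z h).fderiv]; simp

theorem fderiv_sin_half (f : ℝ × ℝ → ℝ) (z v : ℝ × ℝ) (h : DifferentiableAt ℝ f z) :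
    fderiv ℝ (fun w => Real.sin (f w / 2)) z v
      = Real.cos (f z / 2) / 2 * fderiv ℝ f z v := by
  rw [(hasFDerivAt_sin_half f z h).fderiv]; simp

theorem R_inv (θ : ℝ) :
    (R θ)⁻¹ = !![Real.cos θ, Real.sin θ; -Real.sin θ, Real.cos θ] := by
  apply inv_eq_right_inv
  ext i j
  fin_cases i <;> fin_cases j <;>
    simp [R, Matrix.mul_apply, Fin.sum_univ_two] <;>
    nlinarith [Real.sin_sq_add_cos_sq θ]

theorem pdxM_R (φ : ℝ × ℝ → ℝ) (z : ℝ × ℝ) (h : DifferentiableAt ℝ φ z) :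
    pdxM (fun w => R (φ w / 2)) z =
      !![-(Real.sin (φ z / 2) / 2) * pdx φ z, -(Real.cos (φ z / 2) / 2) * pdx φ z;
         Real.cos (φ z / 2) / 2 * pdx φ z, -(Real.sin (φ z / 2) / 2) * pdx φ z] := by
  ext i j
  fin_cases i <;> fin_cases j <;>
    simp only [pdxM, pdx, Matrix.of_apply, R, Matrix.cons_val', Matrix.cons_val_zero,
      Matrix.cons_val_one, Matrix.head_cons, Matrix.empty_val', Matrix.cons_val_fin_one,
      Matrix.head_fin_const, Fin.isValue] <;>
    simp [fderiv_cos_half φ z _ h, fderiv_sin_half φ z _ h,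
      fderiv_neg (f := fun w => Real.sin (φ w / 2))]

theorem pdyM_R (φ : ℝ × ℝ → ℝ) (z : ℝ × ℝ) (h : DifferentiableAt ℝ φ z) :
    pdyM (fun w => R (φ w / 2)) z =
      !![-(Real.sin (φ z / 2) / 2) * pdy φ z, -(Real.cos (φ z / 2) / 2) * pdy φ z;
         Real.cos (φ z / 2) / 2 * pdy φ z, -(Real.sin (φ z / 2) / 2) * pdy φ z] := by
  ext i j
  fin_cases i <;> fin_cases j <;>
    simp only [pdyM, pdy, Matrix.of_apply, R, Matrix.cons_val', Matrix.cons_val_zero,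
      Matrix.cons_val_one, Matrix.head_cons, Matrix.empty_val', Matrix.cons_val_fin_one,
      Matrix.head_fin_const, Fin.isValue] <;>
    simp [fderiv_cos_half φ z _ h, fderiv_sin_half φ z _ h,
      fderiv_neg (f := fun w => Real.sin (φ w / 2))]

set_option maxHeartbeats 1000000 in
/-- Under a coframe rotation by angle `φ`, the associated `sl(2,ℝ)`-valued connection 1-form
transforms by the gauge transformation `A' = R(φ/2) • A`, i.e. coframe rotations correspond
to `SO(2)`-valued gauge transformations through half the angle. -/
theorem coframe_rotation_gauge_transformation
    (U : Set (ℝ × ℝ)) (hU : IsOpen U)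
    (p₁ p₂ q₁ q₂ k₁ k₂ φ : ℝ × ℝ → ℝ)
    (hp₁ : ContDiffOn ℝ (⊤ : ℕ∞) p₁ U) (hp₂ : ContDiffOn ℝ (⊤ : ℕ∞) p₂ U)
    (hq₁ : ContDiffOn ℝ (⊤ : ℕ∞) q₁ U) (hq₂ : ContDiffOn ℝ (⊤ : ℕ∞) q₂ U)
    (hk₁ : ContDiffOn ℝ (⊤ : ℕ∞) k₁ U) (hk₂ : ContDiffOn ℝ (⊤ : ℕ∞) k₂ U)
    (hφ : ContDiffOn ℝ (⊤ : ℕ∞) φ U)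
    (p₁' p₂' q₁' q₂' k₁' k₂' : ℝ × ℝ → ℝ)
    (hp₁' : p₁' = fun z => Real.cos (φ z) * p₁ z + Real.sin (φ z) * q₁ z)
    (hp₂' : p₂' = fun z => Real.cos (φ z) * p₂ z + Real.sin (φ z) * q₂ z)
    (hq₁' : q₁' = fun z => -Real.sin (φ z) * p₁ z + Real.cos (φ z) * q₁ z)
    (hq₂' : q₂' = fun z => -Real.sin (φ z) * p₂ z + Real.cos (φ z) * q₂ z)
    (hk₁' : k₁' = fun z => k₁ z - pdx φ z)
    (hk₂' : k₂' = fun z => k₂ z - pdy φ z)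
    (A₁ A₂ A₁' A₂' : ℝ × ℝ → Matrix (Fin 2) (Fin 2) ℝ)
    (hA₁ : A₁ = fun z => (1/2 : ℝ) • !![q₁ z, p₁ z - k₁ z; p₁ z + k₁ z, -q₁ z])
    (hA₂ : A₂ = fun z => (1/2 : ℝ) • !![q₂ z, p₂ z - k₂ z; p₂ z + k₂ z, -q₂ z])
    (hA₁' : A₁' = fun z => (1/2 : ℝ) • !![q₁' z, p₁' z - k₁' z; p₁' z + k₁' z, -q₁' z])
    (hA₂' : A₂' = fun z => (1/2 : ℝ) • !![q₂' z, p₂' z - k₂' z; p₂' z + k₂' z, -q₂' z]) :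
    ∀ z ∈ U,
      A₁' z = R (φ z / 2) * A₁ z * (R (φ z / 2))⁻¹
        - pdxM (fun w => R (φ w / 2)) z * (R (φ z / 2))⁻¹ ∧
      A₂' z = R (φ z / 2) * A₂ z * (R (φ z / 2))⁻¹
        - pdyM (fun w => R (φ w / 2)) z * (R (φ z / 2))⁻¹ := by
  intro z hz
  have hdφ : DifferentiableAt ℝ φ z :=
    (hφ.contDiffAt (hU.mem_nhds hz)).differentiableAt (by simp)
  have h2 : (2:ℝ) * (φ z / 2) = φ z := by ring
  have hpyth := Real.sin_sq_add_cos_sq (φ z / 2)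
  have hcos2 : Real.cos (φ z) = Real.cos (φ z / 2) ^ 2 - Real.sin (φ z / 2) ^ 2 := by
    conv_lhs => rw [← h2]
    rw [Real.cos_two_mul]; nlinarith [hpyth]
  have hsin2 : Real.sin (φ z) = 2 * Real.sin (φ z / 2) * Real.cos (φ z / 2) := by
    conv_lhs => rw [← h2]
    rw [Real.sin_two_mul]
  subst hp₁' hp₂' hq₁' hq₂' hk₁' hk₂' hA₁ hA₂ hA₁' hA₂'
  refine ⟨?_, ?_⟩
  · rw [R_inv, pdxM_R φ z hdφ]
    ext i j
    fin_cases i <;> fin_cases j <;>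
      simp [R, Matrix.mul_apply, Fin.sum_univ_two, hcos2, hsin2] <;>
      first
        | ring1
        | linear_combination ((pdx φ z - k₁ z) / 2) * hpyth
        | linear_combination ((k₁ z - pdx φ z) / 2) * hpyth
  · rw [R_inv, pdyM_R φ z hdφ]
    ext i j
    fin_cases i <;> fin_cases j <;>
      simp [R, Matrix.mul_apply, Fin.sum_univ_two, hcos2, hsin2] <;>
      first
        | ring1
        | linear_combination ((pdy φ z - k₂ z) / 2) * hpyth
        | linear_combination ((k₂ z - pdy φ z) / 2) * hpyth
end

section
/- Let a, s, u : ℝ → ℝ be smooth with a(x) > 0 for all x. Define the sl(2,ℝ)-valued function A(x) = [[s(x)/2, a(x)],[u(x), -s(x)/2]] and the SL(2,ℝ)-valued function h(x) = [[1, 0],[s(x)/2 + a'(x)/(2a(x)), 1]]·[[a(x)^(-1/2), 0],[0, a(x)^(1/2)]]. Then the gauge transform h•A = hAh⁻¹ - h'h⁻¹ equals [[0, 1],[-T(x), 0]], where T = ½·(a''/a - (3/2)·(a'/a)²) - a·u - ¼·s² - ½·(a'/a)·s + ½·s'. -/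
open Matrix

/-- Entrywise derivative of a matrix-valued function on `ℝ`. -/
noncomputable def derivM (h : ℝ → Matrix (Fin 2) (Fin 2) ℝ) (x : ℝ) :
    Matrix (Fin 2) (Fin 2) ℝ := Matrix.of fun i j => deriv (fun t => h t i j) x

/-- The gauge transformation `h•A = hAh⁻¹ - h'h⁻¹` of a matrix-valued function `A` by a
`GL(2,ℝ)`-valued function `h`. -/
noncomputable def gaugeTransform (h A : ℝ → Matrix (Fin 2) (Fin 2) ℝ) (x : ℝ) :
    Matrix (Fin 2) (Fin 2) ℝ := h x * A x * (h x)⁻¹ - derivM h x * (h x)⁻¹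

set_option maxHeartbeats 2000000 in
/-- The explicit lower-triangular gauge transformation taking the boundary connection
`A = [[s/2, a],[u, -s/2]]` to Drinfeld–Sokolov normal form `[[0,1],[-T,0]]`, where
`T = ½(a''/a - (3/2)(a'/a)²) - au - ¼s² - ½(a'/a)s + ½s'` is the Hill potential. -/
theorem gauge_to_drinfeld_sokolov
    (a s u : ℝ → ℝ)
    (ha : ContDiff ℝ (⊤ : ℕ∞) a) (hs : ContDiff ℝ (⊤ : ℕ∞) s) (hu : ContDiff ℝ (⊤ : ℕ∞) u)
    (hapos : ∀ x, 0 < a x)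
    (A h : ℝ → Matrix (Fin 2) (Fin 2) ℝ)
    (hA : A = fun x => !![s x / 2, a x; u x, -(s x / 2)])
    (hh : h = fun x =>
      !![1, 0; s x / 2 + deriv a x / (2 * a x), 1] *
      !![(Real.sqrt (a x))⁻¹, 0; 0, Real.sqrt (a x)])
    (T : ℝ → ℝ)
    (hT : T = fun x =>
      (1/2) * (deriv (deriv a) x / a x - (3/2) * (deriv a x / a x) ^ 2)
        - a x * u x - (1/4) * (s x) ^ 2 - (1/2) * (deriv a x / a x) * s x
        + (1/2) * deriv s x) :
    ∀ x, gaugeTransform h A x = !![0, 1; -T x, 0] := by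
  intro x
  have hax := hapos x
  have haxne : a x ≠ 0 := hax.ne'
  have hR0 : (0:ℝ) < Real.sqrt (a x) := Real.sqrt_pos.2 hax
  have hRne : Real.sqrt (a x) ≠ 0 := hR0.ne'
  have hda : Differentiable ℝ a := ha.differentiable (by simp)
  have hds : Differentiable ℝ s := hs.differentiable (by simp)
  have hda2 : Differentiable ℝ (deriv a) :=
    ((contDiff_infty_iff_deriv.mp ha).2).differentiable (by simp)
  have hhe : h = fun t => !![(Real.sqrt (a t))⁻¹, 0;
      (s t / 2 + deriv a t / (2 * a t)) * (Real.sqrt (a t))⁻¹, Real.sqrt (a t)] := by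
    rw [hh]; funext t
    ext i j
    fin_cases i <;> fin_cases j <;> simp [Matrix.mul_apply, Fin.sum_univ_two]
  have hda' : HasDerivAt a (deriv a x) x := (hda x).hasDerivAt
  have hds' : HasDerivAt s (deriv s x) x := (hds x).hasDerivAt
  have hda2' : HasDerivAt (deriv a) (deriv (deriv a) x) x := (hda2 x).hasDerivAt
  have hr : HasDerivAt (fun t => Real.sqrt (a t)) (deriv a x / (2 * Real.sqrt (a x))) x :=
    hda'.sqrt haxne
  have hrinv : HasDerivAt (fun t => (Real.sqrt (a t))⁻¹)
      (-(deriv a x / (2 * Real.sqrt (a x))) / (Real.sqrt (a x)) ^ 2) x := hr.inv hRne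
  have hcd : HasDerivAt (fun t => s t / 2 + deriv a t / (2 * a t))
      (deriv s x / 2 +
        (deriv (deriv a) x * (2 * a x) - deriv a x * (2 * deriv a x)) / (2 * a x) ^ 2) x :=
    (hds'.div_const 2).add (hda2'.div (hda'.const_mul 2) (by positivity))
  have h10 : HasDerivAt (fun t => (s t / 2 + deriv a t / (2 * a t)) * (Real.sqrt (a t))⁻¹)
      ((deriv s x / 2 +
        (deriv (deriv a) x * (2 * a x) - deriv a x * (2 * deriv a x)) / (2 * a x) ^ 2)
          * (Real.sqrt (a x))⁻¹ +
       (s x / 2 + deriv a x / (2 * a x)) *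
        (-(deriv a x / (2 * Real.sqrt (a x))) / (Real.sqrt (a x)) ^ 2)) x := hcd.mul hrinv
  have d00 : deriv (fun t => h t 0 0) x
      = -(deriv a x / (2 * Real.sqrt (a x))) / (Real.sqrt (a x)) ^ 2 := by
    have e : (fun t => h t 0 0) = fun t => (Real.sqrt (a t))⁻¹ := by
      funext t; rw [hhe]; simp
    rw [e]; exact hrinv.deriv
  have d01 : deriv (fun t => h t 0 1) x = 0 := by
    have e : (fun t => h t 0 1) = fun _ => (0:ℝ) := by
      funext t; rw [hhe]; simp
    rw [e]; exact deriv_const x 0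
  have d10 : deriv (fun t => h t 1 0) x
      = (deriv s x / 2 +
        (deriv (deriv a) x * (2 * a x) - deriv a x * (2 * deriv a x)) / (2 * a x) ^ 2)
          * (Real.sqrt (a x))⁻¹ +
       (s x / 2 + deriv a x / (2 * a x)) *
        (-(deriv a x / (2 * Real.sqrt (a x))) / (Real.sqrt (a x)) ^ 2) := by
    have e : (fun t => h t 1 0)
        = fun t => (s t / 2 + deriv a t / (2 * a t)) * (Real.sqrt (a t))⁻¹ := by
      funext t; rw [hhe]; simp
    rw [e]; exact h10.deriv
  have d11 : deriv (fun t => h t 1 1) x = deriv a x / (2 * Real.sqrt (a x)) := by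
    have e : (fun t => h t 1 1) = fun t => Real.sqrt (a t) := by
      funext t; rw [hhe]; simp
    rw [e]; exact hr.deriv
  have hD : derivM h x = !![ -(deriv a x / (2 * Real.sqrt (a x))) / (Real.sqrt (a x)) ^ 2, 0;
      (deriv s x / 2 +
        (deriv (deriv a) x * (2 * a x) - deriv a x * (2 * deriv a x)) / (2 * a x) ^ 2)
          * (Real.sqrt (a x))⁻¹ +
       (s x / 2 + deriv a x / (2 * a x)) *
        (-(deriv a x / (2 * Real.sqrt (a x))) / (Real.sqrt (a x)) ^ 2),
      deriv a x / (2 * Real.sqrt (a x))] := by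
    ext i j
    fin_cases i <;> fin_cases j
    · simpa [derivM] using d00
    · simpa [derivM] using d01
    · simpa [derivM] using d10
    · simpa [derivM] using d11
  have hhx : h x = !![(Real.sqrt (a x))⁻¹, 0;
      (s x / 2 + deriv a x / (2 * a x)) * (Real.sqrt (a x))⁻¹, Real.sqrt (a x)] := by
    rw [hhe]
  have hinv : (h x)⁻¹ = !![Real.sqrt (a x), 0;
      -((s x / 2 + deriv a x / (2 * a x)) * (Real.sqrt (a x))⁻¹), (Real.sqrt (a x))⁻¹] := by
    apply Matrix.inv_eq_right_inv
    rw [hhx]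
    ext i j
    fin_cases i <;> fin_cases j
    · simp [Matrix.mul_apply, Fin.sum_univ_two, Matrix.one_fin_two, hRne]
    · simp [Matrix.mul_apply, Fin.sum_univ_two, Matrix.one_fin_two]
    · simp [Matrix.mul_apply, Fin.sum_univ_two, Matrix.one_fin_two]; ring
    · simp [Matrix.mul_apply, Fin.sum_univ_two, Matrix.one_fin_two, hRne]
  have hsq : Real.sqrt (a x) * Real.sqrt (a x) = a x := Real.mul_self_sqrt hax.le
  rw [gaugeTransform, hD, hinv, hhx]
  simp only [hA, hT]
  set R := Real.sqrt (a x) with hRdef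
  ext i j
  fin_cases i <;> fin_cases j <;>
    simp only [Matrix.sub_apply, Matrix.mul_apply, Fin.sum_univ_two, Fin.isValue,
      Matrix.cons_val', Matrix.cons_val_zero, Matrix.cons_val_one, Matrix.head_cons,
      Matrix.empty_val', Matrix.cons_val_fin_one, Matrix.head_fin_const,
      Matrix.cons_val_one, Matrix.of_apply, Fin.mk_zero, Fin.mk_one] <;>
    rw [← hsq] <;> field_simp <;> ring
end

section
/- Let a, s, u : ℝ → ℝ be smooth with a(x) > 0 for all x, and set A(x) = [[s(x)/2, a(x)],[u(x), -s(x)/2]]. Suppose h₁, h₂ : ℝ → SL(2,ℝ) are smooth, pointwise lower triangular with strictly positive diagonal entries, and that for each i = 1,2 the gauge transform hᵢ•A = hᵢAhᵢ⁻¹ - hᵢ'hᵢ⁻¹ has both diagonal entries equal to 0 and upper-right entry equal to 1 at every point. Then h₁ = h₂. -/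
open Matrix

lemma inv2 (M : Matrix (Fin 2) (Fin 2) ℝ) (hd : M.det = 1) :
    M⁻¹ = !![M 1 1, -(M 0 1); -(M 1 0), M 0 0] := by
  rw [Matrix.inv_def, hd, Ring.inverse_one, one_smul, Matrix.adjugate_fin_two]

lemma key (a s u : ℝ → ℝ)
    (A : ℝ → Matrix (Fin 2) (Fin 2) ℝ)
    (hA : A = fun x => !![s x / 2, a x; u x, -(s x / 2)])
    (h : ℝ → Matrix (Fin 2) (Fin 2) ℝ)
    (hdet : ∀ x, (h x).det = 1)
    (hlow : ∀ x, h x 0 1 = 0)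
    (hds : ∀ x, gaugeTransform h A x 0 0 = 0 ∧ gaugeTransform h A x 1 1 = 0 ∧
      gaugeTransform h A x 0 1 = 1) (x : ℝ) :
    h x 0 0 * h x 0 0 * a x = 1 ∧
    h x 0 0 * h x 1 1 * (s x / 2) - h x 0 0 * a x * h x 1 0
      - deriv (fun t => h t 0 0) x * h x 1 1 = 0 := by
  have hinv := inv2 (h x) (hdet x)
  have hd01 : deriv (fun t => h t 0 1) x = 0 := by
    have : (fun t => h t 0 1) = fun _ => (0:ℝ) := funext hlow
    rw [this]; simp
  obtain ⟨h00, h11, h01⟩ := hds x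
  simp only [gaugeTransform, hA, hinv, derivM, Matrix.sub_apply, Matrix.mul_apply,
    Fin.sum_univ_two, Matrix.of_apply, Matrix.cons_val', Matrix.cons_val_zero,
    Matrix.cons_val_one, Matrix.head_cons, Matrix.empty_val', Matrix.cons_val_fin_one,
    Matrix.head_fin_const, hlow x, hd01] at h00 h01
  constructor
  · nlinarith [h01]
  · nlinarith [h00]

/-- Freeness of the gauge action of `B⁻`-valued functions: a smooth lower-triangular
`SL(2,ℝ)`-valued gauge transformation with positive diagonal taking a positive connection
`A = [[s/2, a],[u, -s/2]]` to Drinfeld–Sokolov normal form (zero diagonal, upper-right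
entry 1) is unique. -/
theorem drinfeld_sokolov_gauge_unique
    (a s u : ℝ → ℝ)
    (ha : ContDiff ℝ (⊤ : ℕ∞) a) (hs : ContDiff ℝ (⊤ : ℕ∞) s) (hu : ContDiff ℝ (⊤ : ℕ∞) u)
    (hapos : ∀ x, 0 < a x)
    (A : ℝ → Matrix (Fin 2) (Fin 2) ℝ)
    (hA : A = fun x => !![s x / 2, a x; u x, -(s x / 2)])
    (h₁ h₂ : ℝ → Matrix (Fin 2) (Fin 2) ℝ)
    (hsmooth₁ : ∀ i j, ContDiff ℝ (⊤ : ℕ∞) fun x => h₁ x i j)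
    (hsmooth₂ : ∀ i j, ContDiff ℝ (⊤ : ℕ∞) fun x => h₂ x i j)
    (hdet₁ : ∀ x, (h₁ x).det = 1) (hdet₂ : ∀ x, (h₂ x).det = 1)
    (hlow₁ : ∀ x, h₁ x 0 1 = 0) (hlow₂ : ∀ x, h₂ x 0 1 = 0)
    (hpos₁ : ∀ x, 0 < h₁ x 0 0 ∧ 0 < h₁ x 1 1)
    (hpos₂ : ∀ x, 0 < h₂ x 0 0 ∧ 0 < h₂ x 1 1)
    (hds₁ : ∀ x, gaugeTransform h₁ A x 0 0 = 0 ∧ gaugeTransform h₁ A x 1 1 = 0 ∧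
      gaugeTransform h₁ A x 0 1 = 1)
    (hds₂ : ∀ x, gaugeTransform h₂ A x 0 0 = 0 ∧ gaugeTransform h₂ A x 1 1 = 0 ∧
      gaugeTransform h₂ A x 0 1 = 1) :
    h₁ = h₂ := by
  -- diagonal entries agree
  have hp : ∀ x, h₁ x 0 0 = h₂ x 0 0 := by
    intro x
    have k1 := (key a s u A hA h₁ hdet₁ hlow₁ hds₁ x).1
    have k2 := (key a s u A hA h₂ hdet₂ hlow₂ hds₂ x).1
    have p1 := (hpos₁ x).1
    have p2 := (hpos₂ x).1
    have hax := hapos x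
    nlinarith [sq_nonneg (h₁ x 0 0 - h₂ x 0 0), sq_nonneg (h₁ x 0 0 + h₂ x 0 0)]
  have hr : ∀ x, h₁ x 1 1 = h₂ x 1 1 := by
    intro x
    have d1 := hdet₁ x
    have d2 := hdet₂ x
    rw [Matrix.det_fin_two, hlow₁ x] at d1
    rw [Matrix.det_fin_two, hlow₂ x] at d2
    have p1 := (hpos₁ x).1
    have e1 : h₁ x 0 0 * h₁ x 1 1 = 1 := by linarith
    have e2 : h₁ x 0 0 * h₂ x 1 1 = 1 := by rw [hp x]; linarith
    exact mul_left_cancel₀ (ne_of_gt p1) (e1.trans e2.symm)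
  have hderiv : ∀ x, deriv (fun t => h₁ t 0 0) x = deriv (fun t => h₂ t 0 0) x := by
    intro x
    have : (fun t => h₁ t 0 0) = fun t => h₂ t 0 0 := funext hp
    rw [this]
  have hq : ∀ x, h₁ x 1 0 = h₂ x 1 0 := by
    intro x
    have k1 := (key a s u A hA h₁ hdet₁ hlow₁ hds₁ x).2
    have k2 := (key a s u A hA h₂ hdet₂ hlow₂ hds₂ x).2
    have hax := hapos x
    have p1 := (hpos₁ x).1
    rw [hp x, hr x, hderiv x] at k1
    have p2 := (hpos₂ x).1
    have hne : h₂ x 0 0 * a x ≠ 0 := mul_ne_zero (ne_of_gt p2) (ne_of_gt hax)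
    have : h₂ x 0 0 * a x * h₁ x 1 0 = h₂ x 0 0 * a x * h₂ x 1 0 := by linarith
    exact mul_left_cancel₀ hne this
  funext x
  rw [Matrix.eta_fin_two (h₁ x), Matrix.eta_fin_two (h₂ x), hp x, hq x, hr x, hlow₁ x, hlow₂ x]
end

section
/- Let F : ℝ → ℝ be smooth with F'(x) > 0 for all x, and let T : ℝ → ℝ be smooth. Define Ã(x) = F'(x)·[[0, 1],[-T(F(x)), 0]] and h(x) = [[1, 0],[F''(x)/(2F'(x)), 1]]·[[F'(x)^(-1/2), 0],[0, F'(x)^(1/2)]]. Then the gauge transform h•Ã = hÃh⁻¹ - h'h⁻¹ equals [[0, 1],[-T_F(x), 0]], where T_F(x) = F'(x)²·T(F(x)) + ½·S(F)(x) and S(F) = F'''/F' - (3/2)·(F''/F')² is the Schwarzian derivative of F. -/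
open Matrix

/-- The Schwarzian derivative `S(F) = F'''/F' - (3/2)(F''/F')²`. -/
noncomputable def schwarzian (F : ℝ → ℝ) (x : ℝ) : ℝ :=
  deriv (deriv (deriv F)) x / deriv F x - (3/2) * (deriv (deriv F) x / deriv F x) ^ 2

set_option maxHeartbeats 1000000 in
/-- The action of a diffeomorphism `F` on Hill potentials, `T ↦ F'²·(T∘F) + ½S(F)`, is
realized by an explicit lower-triangular gauge transformation taking the pullback
`Atil = F'·[[0,1],[-T∘F,0]]` of the Drinfeld–Sokolov normal form back to the
Drinfeld–Sokolov slice. -/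
theorem diffeomorphism_action_on_hill_potentials
    (F T : ℝ → ℝ) (hF : ContDiff ℝ (⊤ : ℕ∞) F) (hT : ContDiff ℝ (⊤ : ℕ∞) T)
    (hF' : ∀ x, 0 < deriv F x)
    (Atil h : ℝ → Matrix (Fin 2) (Fin 2) ℝ)
    (hAtil : Atil = fun x => deriv F x • !![0, 1; -T (F x), 0])
    (hh : h = fun x =>
      !![1, 0; deriv (deriv F) x / (2 * deriv F x), 1] *
      !![(Real.sqrt (deriv F x))⁻¹, 0; 0, Real.sqrt (deriv F x)])
    (T_F : ℝ → ℝ)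
    (hTF : T_F = fun x => (deriv F x) ^ 2 * T (F x) + (1/2) * schwarzian F x) :
    ∀ x, gaugeTransform h Atil x = !![0, 1; -T_F x, 0] := by
  have hF1 : ContDiff ℝ (⊤ : ℕ∞) (deriv F) := (contDiff_infty_iff_deriv.mp hF).2
  have hF2 : ContDiff ℝ (⊤ : ℕ∞) (deriv (deriv F)) := (contDiff_infty_iff_deriv.mp hF1).2
  -- rewrite h in explicit entrywise form
  have hh' : h = fun t =>
      !![(Real.sqrt (deriv F t))⁻¹, 0;
         deriv (deriv F) t / (2 * deriv F t) * (Real.sqrt (deriv F t))⁻¹,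
         Real.sqrt (deriv F t)] := by
    rw [hh]; funext t; rw [Matrix.mul_fin_two]; norm_num
  intro x
  have hax : 0 < deriv F x := hF' x
  have hane : deriv F x ≠ 0 := ne_of_gt hax
  have hspos : 0 < Real.sqrt (deriv F x) := Real.sqrt_pos.mpr hax
  have hsne : Real.sqrt (deriv F x) ≠ 0 := ne_of_gt hspos
  have hs2 : Real.sqrt (deriv F x) ^ 2 = deriv F x := Real.sq_sqrt hax.le
  have hd2 : HasDerivAt (deriv F) (deriv (deriv F) x) x :=
    (hF1.differentiable (by simp) x).hasDerivAt
  have hd3 : HasDerivAt (deriv (deriv F)) (deriv (deriv (deriv F)) x) x :=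
    (hF2.differentiable (by simp) x).hasDerivAt
  have hsq : HasDerivAt (fun t => Real.sqrt (deriv F t))
      (1 / (2 * Real.sqrt (deriv F x)) * deriv (deriv F) x) x :=
    (Real.hasDerivAt_sqrt hane).comp x hd2
  have h00 : HasDerivAt (fun t => (Real.sqrt (deriv F t))⁻¹)
      (-(1 / (2 * Real.sqrt (deriv F x)) * deriv (deriv F) x) / Real.sqrt (deriv F x) ^ 2) x :=
    hsq.inv hsne
  have hu : HasDerivAt (fun t => deriv (deriv F) t / (2 * deriv F t))
      ((deriv (deriv (deriv F)) x * (2 * deriv F x)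
        - deriv (deriv F) x * (2 * deriv (deriv F) x)) / (2 * deriv F x) ^ 2) x :=
    hd3.div (hd2.const_mul 2) (by simpa using hane)
  have h10 := hu.mul h00
  -- derivM of h
  have hdM : derivM h x =
      !![-(1 / (2 * Real.sqrt (deriv F x)) * deriv (deriv F) x) / Real.sqrt (deriv F x) ^ 2, 0;
         ((deriv (deriv (deriv F)) x * (2 * deriv F x)
           - deriv (deriv F) x * (2 * deriv (deriv F) x)) / (2 * deriv F x) ^ 2)
           * (Real.sqrt (deriv F x))⁻¹
         + deriv (deriv F) x / (2 * deriv F x)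
           * (-(1 / (2 * Real.sqrt (deriv F x)) * deriv (deriv F) x) / Real.sqrt (deriv F x) ^ 2),
         1 / (2 * Real.sqrt (deriv F x)) * deriv (deriv F) x] := by
    ext i j
    fin_cases i <;> fin_cases j <;>
      simp only [derivM, hh', Matrix.of_apply, Matrix.cons_val', Matrix.cons_val_zero,
        Matrix.cons_val_one, Matrix.head_cons, Matrix.head_fin_const, Matrix.empty_val',
        Matrix.cons_val_fin_one, Fin.isValue]
    · exact h00.deriv
    · simp
    · exact h10.deriv
    · exact hsq.deriv
  -- inverse of h x
  have hinv : (h x)⁻¹ =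
      !![Real.sqrt (deriv F x), 0;
         -(deriv (deriv F) x / (2 * deriv F x)) * (Real.sqrt (deriv F x))⁻¹,
         (Real.sqrt (deriv F x))⁻¹] := by
    apply Matrix.inv_eq_right_inv
    rw [hh', Matrix.mul_fin_two]
    ext i j
    fin_cases i <;> fin_cases j <;>
      simp [Matrix.one_apply] <;>
      field_simp <;> ring
  rw [gaugeTransform, hdM, hinv, hh', hAtil, hTF]
  set s := Real.sqrt (deriv F x) with hs_def
  have hAx : (deriv F x) • !![(0:ℝ), 1; -T (F x), 0]
      = !![0, deriv F x; -(deriv F x * T (F x)), 0] := by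
    ext i j; fin_cases i <;> fin_cases j <;> simp [Matrix.smul_apply] <;> ring
  simp only [hAx]
  rw [Matrix.mul_fin_two, Matrix.mul_fin_two, Matrix.mul_fin_two]
  ext i j
  simp only [schwarzian, Matrix.sub_apply]
  fin_cases i <;> fin_cases j <;>
    simp only [Fin.mk_one, Fin.zero_eta, Matrix.of_apply, Matrix.cons_val', Matrix.cons_val_zero, Matrix.cons_val_one, Matrix.head_cons,
      Matrix.head_fin_const, Matrix.empty_val', Matrix.cons_val_fin_one, Fin.isValue] <;>
    rw [show deriv F x = s ^ 2 from hs2.symm] <;>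
    simp only [Real.sqrt_sq hspos.le] <;>
    field_simp <;> ring
end

section
/- Let f, g : ℝ × ℝ → ℝ be smooth functions such that g(x,0) = 0, ∂ᵧg(x,0) > 0, and ∂ₓf(x,0) > 0 for all x. For (x,y) with (∂ₓf(x,y))² + (∂ₓg(x,y))² ≠ 0, define k(x,y) = ∂ₓf / ((∂ₓf)² + (∂ₓg)²)^(1/2) + g·(∂ₓf·∂ₓ∂ₓg - ∂ₓ∂ₓf·∂ₓg) / ((∂ₓf)² + (∂ₓg)²)^(3/2), all partial derivatives evaluated at (x,y). Then for each x, the limit of (k(x,y) - 1)/y² as y → 0 exists and equals c(x) = g₁(x)·g₁''(x)/f₀'(x)² - g₁(x)·g₁'(x)·f₀''(x)/f₀'(x)³ - ½·g₁'(x)²/f₀'(x)², where f₀(x) = f(x,0) and g₁(x) = ∂ᵧg(x,0). -/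
open Filter

lemma hasDerivAt_slice_x (u : ℝ × ℝ → ℝ) (x b : ℝ) (hu : DifferentiableAt ℝ u (x, b)) :
    HasDerivAt (fun t => u (t, b)) (pdx u (x, b)) x := by
  have h1 : HasDerivAt (fun t : ℝ => (t, b)) ((1:ℝ), (0:ℝ)) x :=
    (hasDerivAt_id x).prodMk (hasDerivAt_const x b)
  exact hu.hasFDerivAt.comp_hasDerivAt x h1

lemma hasDerivAt_slice_y (u : ℝ × ℝ → ℝ) (a y : ℝ) (hu : DifferentiableAt ℝ u (a, y)) :
    HasDerivAt (fun s => u (a, s)) (pdy u (a, y)) y := by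
  have h1 : HasDerivAt (fun s : ℝ => (a, s)) ((0:ℝ), (1:ℝ)) y :=
    (hasDerivAt_const y a).prodMk (hasDerivAt_id y)
  exact hu.hasFDerivAt.comp_hasDerivAt y h1

lemma contDiff_pdx (u : ℝ × ℝ → ℝ) (hu : ContDiff ℝ (⊤ : ℕ∞) u) :
    ContDiff ℝ (⊤ : ℕ∞) (pdx u) := by
  have h := (contDiff_infty_iff_fderiv.mp hu).2
  exact (ContinuousLinearMap.apply ℝ ℝ ((1:ℝ), (0:ℝ))).contDiff.comp h

lemma contDiff_pdy (u : ℝ × ℝ → ℝ) (hu : ContDiff ℝ (⊤ : ℕ∞) u) :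
    ContDiff ℝ (⊤ : ℕ∞) (pdy u) := by
  have h := (contDiff_infty_iff_fderiv.mp hu).2
  exact (ContinuousLinearMap.apply ℝ ℝ ((0:ℝ), (1:ℝ))).contDiff.comp h

lemma pdy_pdx_eq (u : ℝ × ℝ → ℝ) (hu : ContDiff ℝ (⊤ : ℕ∞) u) (z : ℝ × ℝ) :
    pdy (pdx u) z = pdx (pdy u) z := by
  have hsymm : IsSymmSndFDerivAt ℝ u z := by
    apply hu.contDiffAt.isSymmSndFDerivAt
    rw [minSmoothness_of_isRCLikeNormedField]; exact WithTop.coe_le_coe.mpr (le_top : (2:ℕ∞) ≤ ⊤)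
  have hd2 : DifferentiableAt ℝ (fderiv ℝ u) z :=
    ((contDiff_infty_iff_fderiv.mp hu).2.differentiable (by simp)) z
  have key : ∀ v w : ℝ × ℝ, fderiv ℝ (fun p => fderiv ℝ u p v) z w
      = fderiv ℝ (fderiv ℝ u) z w v := by
    intro v w
    have : (fun p => fderiv ℝ u p v)
        = (ContinuousLinearMap.apply ℝ ℝ v) ∘ (fderiv ℝ u) := rfl
    rw [this, fderiv_comp z (ContinuousLinearMap.apply ℝ ℝ v).differentiableAt hd2]
    simp
  show fderiv ℝ (fun p => fderiv ℝ u p (1,0)) z (0,1)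
      = fderiv ℝ (fun p => fderiv ℝ u p (0,1)) z (1,0)
  rw [key, key]
  exact hsymm _ _

lemma tendsto_div_of_hasDerivAt (u : ℝ → ℝ) (d : ℝ) (h : HasDerivAt u d 0) (h0 : u 0 = 0) :
    Tendsto (fun y => u y / y) (nhdsWithin 0 {y : ℝ | y ≠ 0}) (nhds d) := by
  have h1 := hasDerivAt_iff_tendsto_slope.mp h
  have h2 : (fun y => u y / y) = slope u 0 := by
    funext y; rw [slope_def_field]; simp [h0]
  rw [h2]; exact h1

lemma algebra_id (Ay By Gy Ny s y : ℝ) (hs : 0 < s) (hA : 0 < Ay) (hy : y ≠ 0)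
    (hsq : s ^ 2 = Ay ^ 2 + By ^ 2) :
    (Ay / s + Gy * Ny / s ^ 3 - 1) / y ^ 2
      = -((By / y) ^ 2) / (s * (Ay + s)) + (Gy / y) * (Ny / y) / s ^ 3 := by
  have hAs : (0:ℝ) < Ay + s := by positivity
  have h1 : Ay / s - 1 = -(By ^ 2) / (s * (Ay + s)) := by
    have hB2 : By ^ 2 = (s - Ay) * (s + Ay) := by linear_combination -hsq
    rw [hB2]
    field_simp
    ring
  have h2 : Ay / s + Gy * Ny / s ^ 3 - 1 = -(By ^ 2) / (s * (Ay + s)) + Gy * Ny / s ^ 3 := by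
    rw [← h1]; ring
  rw [h2]
  field_simp

/-- The geodesic curvature of horizontal curves near the ideal boundary: for a local
isometry `(f,g)` to the upper half-plane model, with `k(x,y)` the geodesic curvature of
`t ↦ (f(x+t,y), g(x+t,y))`, the limit of `(k(x,y) - 1)/y²` as `y → 0` exists and equals
`c(x) = g₁g₁''/f₀'² - g₁g₁'f₀''/f₀'³ - ½g₁'²/f₀'²`, where `f₀(x) = f(x,0)` and
`g₁(x) = ∂ᵧg(x,0)`. -/
theorem geodesic_curvature_limit
    (f g : ℝ × ℝ → ℝ) (hf : ContDiff ℝ (⊤ : ℕ∞) f) (hg : ContDiff ℝ (⊤ : ℕ∞) g)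
    (hg0 : ∀ x : ℝ, g (x, 0) = 0)
    (hg1pos : ∀ x : ℝ, 0 < pdy g (x, 0))
    (hf0pos : ∀ x : ℝ, 0 < pdx f (x, 0))
    (k : ℝ × ℝ → ℝ)
    (hk : k = fun z =>
      pdx f z / ((pdx f z) ^ 2 + (pdx g z) ^ 2) ^ ((1 : ℝ)/2) +
      g z * (pdx f z * pdx (pdx g) z - pdx (pdx f) z * pdx g z) /
        ((pdx f z) ^ 2 + (pdx g z) ^ 2) ^ ((3 : ℝ)/2))
    (f₀ g₁ : ℝ → ℝ)
    (hf₀ : f₀ = fun x => f (x, 0))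
    (hg₁ : g₁ = fun x => pdy g (x, 0))
    (c : ℝ → ℝ)
    (hc : c = fun x =>
      g₁ x * deriv (deriv g₁) x / (deriv f₀ x) ^ 2
        - g₁ x * deriv g₁ x * deriv (deriv f₀) x / (deriv f₀ x) ^ 3
        - (1/2) * (deriv g₁ x) ^ 2 / (deriv f₀ x) ^ 2) :
    ∀ x : ℝ, Tendsto (fun y : ℝ => (k (x, y) - 1) / y ^ 2)
      (nhdsWithin 0 {y : ℝ | y ≠ 0}) (nhds (c x)) := by
  intro x
  have top1 : ((⊤ : ℕ∞) : WithTop ℕ∞) ≠ 0 := by simp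
  have hfd : Differentiable ℝ f := hf.differentiable top1
  have hgd : Differentiable ℝ g := hg.differentiable top1
  have hpdxf : ContDiff ℝ (⊤:ℕ∞) (pdx f) := contDiff_pdx f hf
  have hpdxg : ContDiff ℝ (⊤:ℕ∞) (pdx g) := contDiff_pdx g hg
  have hpdyg : ContDiff ℝ (⊤:ℕ∞) (pdy g) := contDiff_pdy g hg
  have hpdxxf : ContDiff ℝ (⊤:ℕ∞) (pdx (pdx f)) := contDiff_pdx _ hpdxf
  have hpdxxg : ContDiff ℝ (⊤:ℕ∞) (pdx (pdx g)) := contDiff_pdx _ hpdxg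
  have hpdxyg : ContDiff ℝ (⊤:ℕ∞) (pdx (pdy g)) := contDiff_pdx _ hpdyg
  -- basic values at the boundary
  have hderf₀ : deriv f₀ = fun t => pdx f (t, 0) := by
    funext t
    rw [hf₀]
    exact (hasDerivAt_slice_x f t 0 (hfd _)).deriv
  have hp : 0 < deriv f₀ x := by rw [hderf₀]; exact hf0pos x
  set p : ℝ := deriv f₀ x with hpdef
  have hpA : pdx f (x, 0) = p := by rw [hpdef, hderf₀]
  -- pdx g vanishes on the boundary
  have hB0 : ∀ t : ℝ, pdx g (t, 0) = 0 := by
    intro t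
    have h1 := hasDerivAt_slice_x g t 0 (hgd _)
    have h2 : HasDerivAt (fun s : ℝ => g (s, 0)) 0 t := by
      have he : (fun s : ℝ => g (s, 0)) = fun _ => (0:ℝ) := funext hg0
      rw [he]; exact hasDerivAt_const _ _
    exact h1.unique h2
  have hP0 : pdx (pdx g) (x, 0) = 0 := by
    have h1 := hasDerivAt_slice_x (pdx g) x 0 ((hpdxg.differentiable top1) _)
    have h2 : HasDerivAt (fun s : ℝ => pdx g (s, 0)) 0 x := by
      have he : (fun s : ℝ => pdx g (s, 0)) = fun _ => (0:ℝ) := funext hB0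
      rw [he]; exact hasDerivAt_const _ _
    exact h1.unique h2
  have hQ0 : pdx (pdx f) (x, 0) = deriv (deriv f₀) x := by
    rw [hderf₀]
    exact ((hasDerivAt_slice_x (pdx f) x 0 ((hpdxf.differentiable top1) _)).deriv).symm
  have hderg₁ : deriv g₁ = fun t => pdx (pdy g) (t, 0) := by
    funext t
    rw [hg₁]
    exact (hasDerivAt_slice_x (pdy g) t 0 ((hpdyg.differentiable top1) _)).deriv
  have hq' : pdy (pdx g) (x, 0) = deriv g₁ x := by
    rw [hderg₁, pdy_pdx_eq g hg]
  have hq'' : pdy (pdx (pdx g)) (x, 0) = deriv (deriv g₁) x := by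
    have h1 : pdy (pdx (pdx g)) (x, 0) = pdx (pdy (pdx g)) (x, 0) :=
      pdy_pdx_eq (pdx g) hpdxg _
    have h2 : pdy (pdx g) = pdx (pdy g) := funext (pdy_pdx_eq g hg)
    rw [h1, h2, hderg₁]
    exact ((hasDerivAt_slice_x (pdx (pdy g)) x 0 ((hpdxyg.differentiable top1) _)).deriv).symm
  -- derivatives in the y-direction at 0
  have hA := hasDerivAt_slice_y (pdx f) x 0 ((hpdxf.differentiable top1) _)
  have hB := hasDerivAt_slice_y (pdx g) x 0 ((hpdxg.differentiable top1) _)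
  have hG := hasDerivAt_slice_y g x 0 (hgd _)
  have hP := hasDerivAt_slice_y (pdx (pdx g)) x 0 ((hpdxxg.differentiable top1) _)
  have hQ := hasDerivAt_slice_y (pdx (pdx f)) x 0 ((hpdxxf.differentiable top1) _)
  -- slope limits
  have tG : Tendsto (fun y => g (x, y) / y) (nhdsWithin 0 {y : ℝ | y ≠ 0})
      (nhds (g₁ x)) := by
    have := tendsto_div_of_hasDerivAt _ _ hG (hg0 x)
    rwa [hg₁]
  have tB : Tendsto (fun y => pdx g (x, y) / y) (nhdsWithin 0 {y : ℝ | y ≠ 0})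
      (nhds (deriv g₁ x)) := by
    have := tendsto_div_of_hasDerivAt _ _ hB (hB0 x)
    rwa [hq'] at this
  have tN : Tendsto (fun y =>
        (pdx f (x, y) * pdx (pdx g) (x, y) - pdx (pdx f) (x, y) * pdx g (x, y)) / y)
      (nhdsWithin 0 {y : ℝ | y ≠ 0})
      (nhds (p * deriv (deriv g₁) x - deriv (deriv f₀) x * deriv g₁ x)) := by
    have hNder := (hA.mul hP).sub (hQ.mul hB)
    have hvalue : pdy (pdx f) (x,0) * pdx (pdx g) (x,0) + pdx f (x,0) * pdy (pdx (pdx g)) (x,0)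
        - (pdy (pdx (pdx f)) (x,0) * pdx g (x,0) + pdx (pdx f) (x,0) * pdy (pdx g) (x,0))
        = p * deriv (deriv g₁) x - deriv (deriv f₀) x * deriv g₁ x := by
      rw [hP0, hB0, hpA, hq', hq'', hQ0]; ring
    rw [hvalue] at hNder
    have hN0 : pdx f (x,0) * pdx (pdx g) (x,0) - pdx (pdx f) (x,0) * pdx g (x,0) = 0 := by
      rw [hP0, hB0]; ring
    exact tendsto_div_of_hasDerivAt _ _ hNder hN0
  -- continuity limits
  have hcont : ∀ u : ℝ × ℝ → ℝ, ContDiff ℝ (⊤:ℕ∞) u →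
      Tendsto (fun y => u (x, y)) (nhdsWithin 0 {y : ℝ | y ≠ 0}) (nhds (u (x, 0))) := by
    intro u hu
    have : ContinuousAt (fun y : ℝ => u (x, y)) 0 :=
      (hu.continuous.comp (continuous_const.prodMk continuous_id)).continuousAt
    exact this.continuousWithinAt.tendsto
  have tA : Tendsto (fun y => pdx f (x, y)) (nhdsWithin 0 {y : ℝ | y ≠ 0}) (nhds p) := by
    have := hcont (pdx f) hpdxf
    rwa [hpA] at this
  have tD : Tendsto (fun y => (pdx f (x, y)) ^ 2 + (pdx g (x, y)) ^ 2)
      (nhdsWithin 0 {y : ℝ | y ≠ 0}) (nhds (p ^ 2)) := by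
    have h1 := (tA.pow 2).add (((hcont (pdx g) hpdxg).pow 2))
    have : pdx g (x,0) ^ 2 = 0 := by rw [hB0]; ring
    rw [this, add_zero] at h1
    exact h1
  -- rpow simplifications
  have hsp : (p ^ 2 : ℝ) ^ ((1:ℝ)/2) = p := by
    rw [show (p^2 : ℝ) = p ^ ((2:ℕ):ℝ) by rw [Real.rpow_natCast],
      ← Real.rpow_mul hp.le]
    norm_num
  have hsp3 : (p ^ 2 : ℝ) ^ ((3:ℝ)/2) = p ^ 3 := by
    rw [show (p^2 : ℝ) = p ^ ((2:ℕ):ℝ) by rw [Real.rpow_natCast],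
      ← Real.rpow_mul hp.le]
    norm_num
  have ts : Tendsto (fun y => ((pdx f (x, y)) ^ 2 + (pdx g (x, y)) ^ 2) ^ ((1:ℝ)/2))
      (nhdsWithin 0 {y : ℝ | y ≠ 0}) (nhds p) := by
    have := tD.rpow_const (Or.inr (by norm_num : (0:ℝ) ≤ 1/2))
    rwa [hsp] at this
  have ts3 : Tendsto (fun y => ((pdx f (x, y)) ^ 2 + (pdx g (x, y)) ^ 2) ^ ((3:ℝ)/2))
      (nhdsWithin 0 {y : ℝ | y ≠ 0}) (nhds (p ^ 3)) := by
    have := tD.rpow_const (Or.inr (by norm_num : (0:ℝ) ≤ 3/2))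
    rwa [hsp3] at this
  -- the limit of the right-hand side
  have hden1 : p * (p + p) ≠ 0 := by positivity
  have hden2 : (p:ℝ) ^ 3 ≠ 0 := by positivity
  have T1 : Tendsto (fun y =>
      -((pdx g (x, y) / y) ^ 2) /
        (((pdx f (x, y)) ^ 2 + (pdx g (x, y)) ^ 2) ^ ((1:ℝ)/2) *
          (pdx f (x, y) + ((pdx f (x, y)) ^ 2 + (pdx g (x, y)) ^ 2) ^ ((1:ℝ)/2))))
      (nhdsWithin 0 {y : ℝ | y ≠ 0})
      (nhds (-((deriv g₁ x) ^ 2) / (p * (p + p)))) :=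
    ((tB.pow 2).neg).div (ts.mul (tA.add ts)) hden1
  have T2 : Tendsto (fun y =>
      (g (x, y) / y) *
        ((pdx f (x, y) * pdx (pdx g) (x, y) - pdx (pdx f) (x, y) * pdx g (x, y)) / y) /
        ((pdx f (x, y)) ^ 2 + (pdx g (x, y)) ^ 2) ^ ((3:ℝ)/2))
      (nhdsWithin 0 {y : ℝ | y ≠ 0})
      (nhds (g₁ x * (p * deriv (deriv g₁) x - deriv (deriv f₀) x * deriv g₁ x) / p ^ 3)) :=
    (tG.mul tN).div ts3 hden2
  have Tsum := T1.add T2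
  -- the sum of the limits is c x
  have hval : -((deriv g₁ x) ^ 2) / (p * (p + p))
      + g₁ x * (p * deriv (deriv g₁) x - deriv (deriv f₀) x * deriv g₁ x) / p ^ 3 = c x := by
    rw [hc]; simp only [← hpdef]
    have hpne : p ≠ 0 := hp.ne'
    field_simp
    ring
  rw [hval] at Tsum
  -- eventual equality of the two expressions
  have hApos : ∀ᶠ y in nhdsWithin (0:ℝ) {y : ℝ | y ≠ 0}, 0 < pdx f (x, y) :=
    tA.eventually (eventually_gt_nhds hp)
  have hev : ∀ᶠ y in nhdsWithin (0:ℝ) {y : ℝ | y ≠ 0},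
      -((pdx g (x, y) / y) ^ 2) /
        (((pdx f (x, y)) ^ 2 + (pdx g (x, y)) ^ 2) ^ ((1:ℝ)/2) *
          (pdx f (x, y) + ((pdx f (x, y)) ^ 2 + (pdx g (x, y)) ^ 2) ^ ((1:ℝ)/2)))
      + (g (x, y) / y) *
        ((pdx f (x, y) * pdx (pdx g) (x, y) - pdx (pdx f) (x, y) * pdx g (x, y)) / y) /
        ((pdx f (x, y)) ^ 2 + (pdx g (x, y)) ^ 2) ^ ((3:ℝ)/2)
      = (k (x, y) - 1) / y ^ 2 := by
    filter_upwards [hApos, self_mem_nhdsWithin] with y hAy hy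
    have hyne : y ≠ 0 := hy
    have hD : (0:ℝ) < (pdx f (x, y)) ^ 2 + (pdx g (x, y)) ^ 2 := by
      have := hAy.ne'
      positivity
    set Dy : ℝ := (pdx f (x, y)) ^ 2 + (pdx g (x, y)) ^ 2 with hDy
    have hs_pos : 0 < Dy ^ ((1:ℝ)/2) := Real.rpow_pos_of_pos hD _
    have hsq : (Dy ^ ((1:ℝ)/2)) ^ 2 = (pdx f (x, y)) ^ 2 + (pdx g (x, y)) ^ 2 := by
      rw [← Real.rpow_natCast (Dy ^ ((1:ℝ)/2)) 2, ← Real.rpow_mul hD.le]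
      norm_num
      exact hDy
    have h32 : Dy ^ ((3:ℝ)/2) = (Dy ^ ((1:ℝ)/2)) ^ 3 := by
      rw [← Real.rpow_natCast (Dy ^ ((1:ℝ)/2)) 3, ← Real.rpow_mul hD.le]
      norm_num
    have hk' : k (x, y) = pdx f (x, y) / Dy ^ ((1:ℝ)/2)
        + g (x, y) * (pdx f (x, y) * pdx (pdx g) (x, y) - pdx (pdx f) (x, y) * pdx g (x, y))
          / (Dy ^ ((1:ℝ)/2)) ^ 3 := by
      rw [hk, ← h32]
    rw [hk', h32]
    have := algebra_id (pdx f (x, y)) (pdx g (x, y)) (g (x, y))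
      (pdx f (x, y) * pdx (pdx g) (x, y) - pdx (pdx f) (x, y) * pdx g (x, y))
      (Dy ^ ((1:ℝ)/2)) y hs_pos hAy hyne hsq
    rw [show pdx f (x, y) / Dy ^ ((1:ℝ)/2)
        + g (x, y) * (pdx f (x, y) * pdx (pdx g) (x, y) - pdx (pdx f) (x, y) * pdx g (x, y))
          / (Dy ^ ((1:ℝ)/2)) ^ 3 - 1
      = pdx f (x, y) / Dy ^ ((1:ℝ)/2)
        + g (x, y) * (pdx f (x, y) * pdx (pdx g) (x, y) - pdx (pdx f) (x, y) * pdx g (x, y))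
          / (Dy ^ ((1:ℝ)/2)) ^ 3 - 1 from rfl]
    rw [this]
  exact Tsum.congr' hev
end

section
/- Let f₀, g₁ : ℝ → ℝ be smooth with f₀'(x) > 0 and g₁(x) > 0 for all x. Define a = f₀'/g₁, s = g₁'/g₁, and c = g₁·g₁''/(f₀')² - g₁·g₁'·f₀''/(f₀')³ - ½·(g₁')²/(f₀')². Then a²·c = s' - (a'/a)·s - ½·s², and consequently ½·(a''/a - (3/2)·(a'/a)²) - ¼·s² - ½·(a'/a)·s + ½·s' = ½·(a''/a - (3/2)·(a'/a)²) + ½·a²·c. -/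
/-- The identity `a²c = s' - (a'/a)s - ½s²` relating the quadratic coefficient `c` of the
geodesic-curvature expansion to `a = f₀'/g₁` and `s = g₁'/g₁`, and the resulting equality
of the two expressions for the Hill potential (Theorem C of the paper). -/
theorem hill_potential_geodesic_curvature_identity
    (f₀ g₁ : ℝ → ℝ) (hf₀ : ContDiff ℝ (⊤ : ℕ∞) f₀) (hg₁ : ContDiff ℝ (⊤ : ℕ∞) g₁)
    (hf₀' : ∀ x, 0 < deriv f₀ x) (hg₁pos : ∀ x, 0 < g₁ x)
    (a s c : ℝ → ℝ)
    (ha : a = fun x => deriv f₀ x / g₁ x)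
    (hs : s = fun x => deriv g₁ x / g₁ x)
    (hc : c = fun x =>
      g₁ x * deriv (deriv g₁) x / (deriv f₀ x) ^ 2
        - g₁ x * deriv g₁ x * deriv (deriv f₀) x / (deriv f₀ x) ^ 3
        - (1/2) * (deriv g₁ x) ^ 2 / (deriv f₀ x) ^ 2) :
    ∀ x, (a x) ^ 2 * c x = deriv s x - (deriv a x / a x) * s x - (1/2) * (s x) ^ 2 ∧
      (1/2) * (deriv (deriv a) x / a x - (3/2) * (deriv a x / a x) ^ 2)
          - (1/4) * (s x) ^ 2 - (1/2) * (deriv a x / a x) * s x + (1/2) * deriv s x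
        = (1/2) * (deriv (deriv a) x / a x - (3/2) * (deriv a x / a x) ^ 2)
          + (1/2) * (a x) ^ 2 * c x := by
  intro x
  have hg₁d : Differentiable ℝ g₁ := hg₁.differentiable (by norm_num)
  have hdg₁ : Differentiable ℝ (deriv g₁) :=
    ((contDiff_infty_iff_deriv.mp hg₁).2).differentiable (by norm_num)
  have hf₀d : Differentiable ℝ f₀ := hf₀.differentiable (by norm_num)
  have hdf₀ : Differentiable ℝ (deriv f₀) :=
    ((contDiff_infty_iff_deriv.mp hf₀).2).differentiable (by norm_num)
  have hgne : g₁ x ≠ 0 := (hg₁pos x).ne'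
  have hfne : deriv f₀ x ≠ 0 := (hf₀' x).ne'
  have hds : deriv s x
      = (deriv (deriv g₁) x * g₁ x - deriv g₁ x * deriv g₁ x) / (g₁ x) ^ 2 := by
    rw [hs]
    exact deriv_div (hdg₁.differentiableAt) (hg₁d.differentiableAt) hgne
  have hda : deriv a x
      = (deriv (deriv f₀) x * g₁ x - deriv f₀ x * deriv g₁ x) / (g₁ x) ^ 2 := by
    rw [ha]
    exact deriv_div (hdf₀.differentiableAt) (hg₁d.differentiableAt) hgne
  have h1 : (a x) ^ 2 * c x
      = deriv s x - (deriv a x / a x) * s x - (1/2) * (s x) ^ 2 := by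
    rw [hds, hda]
    simp only [ha, hs, hc]
    field_simp
    ring
  refine ⟨h1, ?_⟩
  linarith [h1]
end

section
/- Let ℓ > 0, τ ∈ ℝ, and let f : ℝ → ℝ be smooth. On ℝ² with coordinates (x,u), define the 2×2-matrix-valued functions A₁(x,u) = ½·[[0, eᵘ·ℓ],[e⁻ᵘ·ℓ, 0]] and A₂(x,u) = ½·[[-1, eᵘ·τ·f'(u)],[e⁻ᵘ·τ·f'(u), 1]]. Then (A₁,A₂) satisfies the zero-curvature equation: ∂ₓA₂ - ∂ᵤA₁ + A₁A₂ - A₂A₁ = 0. -/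
open Matrix Real

/-- Partial derivative in the second (`u`) direction of a function on `ℝ²`. -/
noncomputable def pdu (f : ℝ × ℝ → ℝ) (z : ℝ × ℝ) : ℝ := fderiv ℝ f z (0, 1)

/-- Entrywise partial derivative in the second direction of a matrix-valued function. -/
noncomputable def pduM (A : ℝ × ℝ → Matrix (Fin 2) (Fin 2) ℝ) (z : ℝ × ℝ) :
    Matrix (Fin 2) (Fin 2) ℝ := Matrix.of fun i j => pdu (fun w => A w i j) z


lemma fderiv_comp_snd (g : ℝ → ℝ) (z : ℝ × ℝ) (hg : DifferentiableAt ℝ g z.2)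
    (v : ℝ × ℝ) :
    fderiv ℝ (fun w : ℝ × ℝ => g w.2) z v = fderiv ℝ g z.2 v.2 := by
  have h := fderiv_comp z hg differentiableAt_snd
  have e : (fun w : ℝ × ℝ => g w.2) = g ∘ Prod.snd := rfl
  rw [e, h]
  simp [fderiv_snd]

lemma pdx_snd (g : ℝ → ℝ) (z : ℝ × ℝ) (hg : DifferentiableAt ℝ g z.2) :
    pdx (fun w => g w.2) z = 0 := by
  unfold pdx
  rw [fderiv_comp_snd g z hg]
  simp

lemma pdu_snd (g : ℝ → ℝ) (g' : ℝ) (z : ℝ × ℝ) (hg : HasDerivAt g g' z.2) :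
    pdu (fun w => g w.2) z = g' := by
  unfold pdu
  rw [fderiv_comp_snd g z hg.differentiableAt]
  have h := hg.deriv
  simp only [deriv] at h
  simpa using h

/-- The connection of the hyperbolic cylinder of neck length `ℓ`, twisted by the
Fenchel–Nielsen twist `τ` implemented by the profile function `f`, is flat:
the pair `A₁ = ½[[0, eᵘℓ],[e⁻ᵘℓ, 0]]`, `A₂ = ½[[-1, eᵘτf'(u)],[e⁻ᵘτf'(u), 1]]`
satisfies the zero-curvature equation. -/
theorem twisted_cylinder_connection_flat
    (ℓ τ : ℝ) (hℓ : 0 < ℓ) (f : ℝ → ℝ) (hf : ContDiff ℝ (⊤ : ℕ∞) f)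
    (A₁ A₂ : ℝ × ℝ → Matrix (Fin 2) (Fin 2) ℝ)
    (hA₁ : A₁ = fun z => (1/2 : ℝ) •
      !![0, Real.exp z.2 * ℓ; Real.exp (-z.2) * ℓ, 0])
    (hA₂ : A₂ = fun z => (1/2 : ℝ) •
      !![-1, Real.exp z.2 * τ * deriv f z.2;
         Real.exp (-z.2) * τ * deriv f z.2, 1]) :
    ∀ z : ℝ × ℝ, pdxM A₂ z - pduM A₁ z + A₁ z * A₂ z - A₂ z * A₁ z = 0 := by
  subst hA₁ hA₂
  intro z
  have hdf : DifferentiableAt ℝ (deriv f) z.2 :=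
    ((contDiff_infty_iff_deriv.mp hf).2.differentiable (by simp)) z.2
  have hexp : HasDerivAt (fun u : ℝ => Real.exp u) (Real.exp z.2) z.2 :=
    Real.hasDerivAt_exp z.2
  have hexpn : HasDerivAt (fun u : ℝ => Real.exp (-u)) (-Real.exp (-z.2)) z.2 := by
    simpa using ((hasDerivAt_neg z.2).exp)
  have q1 : pdx (fun w : ℝ × ℝ => 1 / 2 * (Real.exp w.2 * τ * deriv f w.2)) z = 0 :=
    pdx_snd _ z (((hexp.differentiableAt.mul (differentiableAt_const τ)).mul
      hdf).const_mul _)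
  have q2 : pdx (fun w : ℝ × ℝ => 1 / 2 * (Real.exp (-w.2) * τ * deriv f w.2)) z = 0 :=
    pdx_snd _ z (((hexpn.differentiableAt.mul (differentiableAt_const τ)).mul
      hdf).const_mul _)
  have p1 : pdu (fun w : ℝ × ℝ => 1 / 2 * (Real.exp w.2 * ℓ)) z
      = 1 / 2 * (Real.exp z.2 * ℓ) := by
    have := pdu_snd _ _ z ((hexp.mul_const ℓ).const_mul (1/2 : ℝ))
    simpa using this
  have p2 : pdu (fun w : ℝ × ℝ => 1 / 2 * (Real.exp (-w.2) * ℓ)) z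
      = 1 / 2 * (-Real.exp (-z.2) * ℓ) := by
    have := pdu_snd _ _ z ((hexpn.mul_const ℓ).const_mul (1/2 : ℝ))
    simpa [mul_assoc] using this
  have c0 : ∀ c : ℝ, pdx (fun _ : ℝ × ℝ => c) z = 0 := by
    intro c; unfold pdx; simp
  have c1 : ∀ c : ℝ, pdu (fun _ : ℝ × ℝ => c) z = 0 := by
    intro c; unfold pdu; simp
  ext i j
  fin_cases i <;> fin_cases j <;>
  · simp only [pdxM, pduM, Matrix.of_apply, Matrix.sub_apply, Matrix.add_apply,
      Matrix.mul_apply, Fin.sum_univ_two, Matrix.smul_apply, Matrix.cons_val',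
      Matrix.cons_val_zero, Matrix.cons_val_one, Matrix.head_cons, Matrix.vecHead,
      Matrix.empty_val', Matrix.cons_val_fin_one, Matrix.zero_apply,
      Fin.mk_zero, Fin.mk_one, Fin.isValue, smul_eq_mul, mul_zero, mul_one,
      mul_neg_one, q1, q2, p1, p2, c0, c1]
    field_simp [Real.exp_neg]
    ring
end
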